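/- arXiv:1802.06231 — 3 statements merged into one kernel-verified Lean document; each statement's English description precedes it below -/
import Mathlib

section
/- For the balancing-selection flow φ_t(x) = 1/2 − (1/2)·(1−2x)/√(4x(1−x)(e^{at}−1)+1) with a > 0, for every x ≥ 0 the limit H(x) = lim_{t→∞} φ_t(x·e^{−at}) exists and equals 1/2 − (1/2)/√(4x+1). -/
open Real Filter

/-- For the balancing-selection flow
    φ_t(x) = 1/2 − (1/2)(1−2x)/√(4x(1−x)(e^{at}−1)+1),
    the limit H(x) = lim_{t→∞} φ_t(x e^{−at}) exists and equals 1/2 − (1/2)/√(4x+1). -/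
theorem balancing_selection_H (a : ℝ) (ha : 0 < a)
    (φ : ℝ → ℝ → ℝ)
    (hφ : ∀ t y : ℝ, φ t y =
      1 / 2 - (1 / 2) * (1 - 2 * y) / Real.sqrt (4 * y * (1 - y) * (Real.exp (a * t) - 1) + 1))
    (x : ℝ) (hx : 0 ≤ x) :
    Tendsto (fun t : ℝ => φ t (x * Real.exp (-a * t))) atTop
      (nhds (1 / 2 - (1 / 2) / Real.sqrt (4 * x + 1))) := by
  set F : ℝ → ℝ := fun u => 1 / 2 - (1 / 2) * (1 - 2 * (x * u)) /
    Real.sqrt (4 * x * (1 - x * u) * (1 - u) + 1) with hF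
  have h0 : Tendsto (fun t : ℝ => Real.exp (-a * t)) atTop (nhds 0) := by
    have h1 : Tendsto (fun t : ℝ => a * t) atTop atTop :=
      Tendsto.const_mul_atTop ha tendsto_id
    have := Real.tendsto_exp_neg_atTop_nhds_zero.comp h1
    simpa only [Function.comp_def, neg_mul] using this
  have hden : Real.sqrt (4 * x * (1 - x * 0) * (1 - 0) + 1) ≠ 0 := by
    have : (0:ℝ) < 4 * x * (1 - x * 0) * (1 - 0) + 1 := by nlinarith
    positivity
  have hc : ContinuousAt F 0 := by
    apply ContinuousAt.sub continuousAt_const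
    apply ContinuousAt.div
    · fun_prop
    · exact (Real.continuous_sqrt.comp (by continuity)).continuousAt
    · exact hden
  have hF0 : F 0 = 1 / 2 - (1 / 2) / Real.sqrt (4 * x + 1) := by
    simp [hF]
  have hmain : Tendsto (fun t : ℝ => F (Real.exp (-a * t))) atTop
      (nhds (1 / 2 - (1 / 2) / Real.sqrt (4 * x + 1))) := by
    rw [← hF0]
    exact hc.tendsto.comp h0
  refine hmain.congr fun t => ?_
  have hexp : Real.exp (-a * t) * Real.exp (a * t) = 1 := by
    rw [← Real.exp_add]; ring_nf; exact Real.exp_zero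
  have harg : 4 * (x * Real.exp (-a * t)) * (1 - x * Real.exp (-a * t)) * (Real.exp (a * t) - 1) + 1
      = 4 * x * (1 - x * Real.exp (-a * t)) * (1 - Real.exp (-a * t)) + 1 := by
    linear_combination (4 * x * (1 - x * Real.exp (-a * t))) * hexp
  simp only [hF, hφ, harg]
end

section
/- The function φ_t(x) = 1/2 − (1/2)·(1−2x)/√(4x(1−x)(e^{at}−1)+1) solves the ODE dx/dt = a·x·(1−x)·(1−2x) with initial condition x at t = 0, for x ∈ (0, 1/2). -/
open Real

/-- The balancing-selection flow solves x' = a x (1-x)(1-2x) with x(0) = x₀. -/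
theorem balancing_selection_flow (a : ℝ) (ha : 0 < a) (x : ℝ) (hx0 : 0 < x) (hx1 : x < 1 / 2)
    (u : ℝ → ℝ)
    (hu : ∀ t : ℝ, u t =
      1 / 2 - (1 / 2) * (1 - 2 * x) / Real.sqrt (4 * x * (1 - x) * (Real.exp (a * t) - 1) + 1)) :
    u 0 = x ∧ ∀ t : ℝ, 0 ≤ t →
      HasDerivAt u (a * u t * (1 - u t) * (1 - 2 * u t)) t := by
  set c : ℝ := 4 * x * (1 - x) with hc
  have hc0 : 0 < c := by nlinarith
  have hc1 : c < 1 := by nlinarith [sq_nonneg (1 - 2 * x)]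
  have hD : ∀ t : ℝ, 0 < c * (Real.exp (a * t) - 1) + 1 := by
    intro t
    have h := Real.exp_pos (a * t)
    nlinarith
  constructor
  · rw [hu 0]
    simp [Real.exp_zero, Real.sqrt_one]
    ring
  · intro t _ht
    have hDt : 0 < c * (Real.exp (a * t) - 1) + 1 := hD t
    have hs : 0 < Real.sqrt (c * (Real.exp (a * t) - 1) + 1) := Real.sqrt_pos.mpr hDt
    set s : ℝ := Real.sqrt (c * (Real.exp (a * t) - 1) + 1) with hsdef
    have hsq : s ^ 2 = c * (Real.exp (a * t) - 1) + 1 := Real.sq_sqrt hDt.le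
    -- derivative of inner function
    have h1 : HasDerivAt (fun t : ℝ => a * t) a t := by
      simpa using (hasDerivAt_id t).const_mul a
    have h2 : HasDerivAt (fun t : ℝ => Real.exp (a * t)) (Real.exp (a * t) * a) t :=
      (Real.hasDerivAt_exp (a * t)).comp t h1
    have h3 : HasDerivAt (fun t : ℝ => c * (Real.exp (a * t) - 1) + 1)
        (c * (Real.exp (a * t) * a)) t :=
      (((h2.sub_const 1).const_mul c).add_const 1)
    have h4 : HasDerivAt (fun t : ℝ => Real.sqrt (c * (Real.exp (a * t) - 1) + 1))
        (c * (Real.exp (a * t) * a) / (2 * s)) t := h3.sqrt hDt.ne'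
    have h5 : HasDerivAt (fun t : ℝ => (1 / 2) * (1 - 2 * x) /
        Real.sqrt (c * (Real.exp (a * t) - 1) + 1))
        ((0 * s - (1 / 2) * (1 - 2 * x) * (c * (Real.exp (a * t) * a) / (2 * s))) / s ^ 2) t :=
      (hasDerivAt_const t ((1 / 2) * (1 - 2 * x))).div h4 hs.ne'
    have h6 := h5.const_sub (1 / 2)
    have h7 : HasDerivAt u
        (-((0 * s - (1 / 2) * (1 - 2 * x) * (c * (Real.exp (a * t) * a) / (2 * s))) / s ^ 2)) t := by
      refine h6.congr_of_eventuallyEq ?_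
      filter_upwards with y
      rw [hu y]
    convert h7 using 1
    rw [hu t, ← hsdef]
    have h4b : (1 - 2 * x) ^ 2 = 1 - c := by rw [hc]; ring
    have hkey : s ^ 2 - (1 - 2 * x) ^ 2 = c * Real.exp (a * t) := by
      rw [hsq, h4b]; ring
    field_simp
    linear_combination (a * (1 - 2 * x)) * hkey
end

section
/- Let f be C² on [0,∞) with f(0)=0, a := f'(0) > 0, bounded second derivative, and f > 0 on (0, x*) where x* is the smallest positive root of f (or ∞). Define G(x) = ∫₀ˣ (1/f(u) − 1/(a u)) du + (1/a)·log x for x ∈ (0, x*). Then G is strictly increasing on (0, x*), G(x) → −∞ as x → 0⁺, and (assuming additionally f(x) ≤ a·x for all x ≥ 0) G(x) → +∞ as x → x*. Hence G is a bijection from (0, x*) onto ℝ. -/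
open Set Filter MeasureTheory

/-- Let f be C² with f(0)=0, a=f'(0)>0, |f''| ≤ M on [0,∞), f(x) ≤ ax on [0,∞),
    and f > 0 on (0,x*) where x* ∈ (0,∞] is the first positive zero of f (⊤ if none).
    Then G(x) = ∫₀ˣ (1/f − 1/(a·)) + (1/a) log x is strictly increasing on
    I = (0, x*), tends to −∞ at 0⁺, tends to +∞ at x*, and is a bijection from I onto ℝ. -/
theorem G_bijection (f : ℝ → ℝ) (a M : ℝ) (xstar : EReal)
    (I : Set ℝ) (hI : I = {x : ℝ | 0 < x ∧ (x : EReal) < xstar})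
    (hf : ContDiff ℝ 2 f) (hf0 : f 0 = 0) (ha : deriv f 0 = a) (ha0 : 0 < a)
    (hf'' : ∀ v ∈ Ici (0:ℝ), |deriv (deriv f) v| ≤ M)
    (hlin : ∀ x ∈ Ici (0:ℝ), f x ≤ a * x)
    (hxstar : 0 < xstar)
    (hfpos : ∀ x ∈ I, 0 < f x)
    (hroot : xstar = ⊤ ∨ ∃ r : ℝ, xstar = (r : EReal) ∧ f r = 0)
    (G : ℝ → ℝ)
    (hG : ∀ x : ℝ, G x =
      (∫ u in Ioc (0:ℝ) x, (1 / f u - 1 / (a * u))) + (1 / a) * Real.log x) :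
    StrictMonoOn G I ∧
    Tendsto G (nhdsWithin 0 (Ioi 0)) atBot ∧
    Tendsto G ((Filter.comap (fun x : ℝ => (x : EReal)) (nhdsWithin xstar (Iio xstar))) ⊓
      Filter.principal I) atTop ∧
    Set.BijOn G I Set.univ := by
  -- basic differentiability facts
  have hf2 : ContDiff ℝ ((1:ℕ) + 1) f := by exact_mod_cast hf
  have hd1 : Differentiable ℝ f := hf.differentiable (by norm_num)
  have hd2 : Differentiable ℝ (deriv f) :=
    ((contDiff_succ_iff_deriv.mp hf2).2.2).differentiable (by norm_num)
  have hM0 : 0 ≤ M := le_trans (abs_nonneg _) (hf'' 0 (mem_Ici.mpr le_rfl))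
  -- lower bound on deriv f
  have hderiv_low : ∀ t ∈ Ici (0:ℝ), a - M * t ≤ deriv f t := by
    intro t ht
    have key := norm_image_sub_le_of_norm_deriv_le_segment'
      (f := deriv f) (f' := deriv (deriv f)) (a := 0) (b := t) (C := M)
      (fun x hx => (hd2 x).hasDerivAt.hasDerivWithinAt)
      (fun x hx => hf'' x hx.1) t (right_mem_Icc.mpr ht)
    rw [Real.norm_eq_abs, sub_zero] at key
    have := abs_le.mp key
    linarith [this.1, ha ▸ this.1]
  -- Taylor lower bound for f
  have hlow : ∀ u ∈ Ici (0:ℝ), a * u - M / 2 * u ^ 2 ≤ f u := by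
    intro u hu
    set g : ℝ → ℝ := fun u => f u - (a * u - M / 2 * u ^ 2) with hg
    have hgd : ∀ x : ℝ, HasDerivAt g (deriv f x - (a - M * x)) x := by
      intro x
      have h1 : HasDerivAt (fun u : ℝ => a * u - M / 2 * u ^ 2) (a - M * x) x := by
        have := ((hasDerivAt_id x).const_mul a).sub
          (((hasDerivAt_pow 2 x)).const_mul (M / 2))
        exact this.congr_deriv (by norm_num; ring)
      exact ((hd1 x).hasDerivAt).sub h1
    have hmono : MonotoneOn g (Ici 0) := by
      refine monotoneOn_of_deriv_nonneg (convex_Ici 0)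
        (fun x hx => ((hgd x).continuousAt.continuousWithinAt))
        (fun x hx => ((hgd x).differentiableAt.differentiableWithinAt)) ?_
      intro x hx
      rw [interior_Ici] at hx
      rw [(hgd x).deriv]
      have := hderiv_low x (mem_Ici.mpr (le_of_lt hx))
      linarith
    have := hmono self_mem_Ici hu hu
    simp only [hg, hf0] at this
    linarith
  -- the integrand
  set h : ℝ → ℝ := fun u => 1 / f u - 1 / (a * u) with hh
  -- I is downward closed in (0,∞)
  have hIdown : ∀ x ∈ I, ∀ y : ℝ, 0 < y → y ≤ x → y ∈ I := by
    intro x hx y hy hyx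
    rw [hI] at hx ⊢
    exact ⟨hy, lt_of_le_of_lt (EReal.coe_le_coe_iff.mpr hyx) hx.2⟩
  have hIpos : ∀ x ∈ I, 0 < x := by intro x hx; rw [hI] at hx; exact hx.1
  have hnn : ∀ u ∈ I, 0 ≤ h u := by
    intro u hu
    have hu0 := hIpos u hu
    have hfu := hfpos u hu
    have : 1 / (a * u) ≤ 1 / f u :=
      one_div_le_one_div_of_le hfu (hlin u hu0.le)
    simpa [hh] using sub_nonneg.mpr this
  -- δ and bounds near 0
  set δ : ℝ := a / (M + 1) with hδ
  have hδ0 : 0 < δ := div_pos ha0 (by linarith)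
  have hfposδ : ∀ u ∈ Ioc (0:ℝ) δ, a / 2 * u ≤ f u := by
    intro u hu
    have hMu : M * u ≤ a := by
      have h1 : u ≤ a / (M + 1) := hu.2
      have h2 : M * u ≤ M * (a / (M + 1)) := by
        rcases eq_or_lt_of_le hM0 with h | h
        · simp [← h]
        · exact mul_le_mul_of_nonneg_left h1 hM0
      have h3 : M * (a / (M + 1)) ≤ a := by
        rw [mul_div_assoc']
        rw [div_le_iff₀ (by linarith)]
        nlinarith
      linarith
    have := hlow u hu.1.le
    nlinarith [hu.1]
  have hbound : ∀ u ∈ Ioc (0:ℝ) δ, |h u| ≤ M / a ^ 2 := by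
    intro u hu
    have hu0 := hu.1
    have hfu2 : a / 2 * u ≤ f u := hfposδ u hu
    have hfu0 : 0 < f u := lt_of_lt_of_le (by positivity) hfu2
    have hfu1 : f u ≤ a * u := hlin u hu0.le
    have hfl : a * u - M / 2 * u ^ 2 ≤ f u := hlow u hu0.le
    have habs : h u = (a * u - f u) / (f u * (a * u)) := by
      rw [hh]
      field_simp
    have hnn' : 0 ≤ h u := by
      rw [habs]
      apply div_nonneg (by linarith) (by positivity)
    rw [abs_of_nonneg hnn', habs]
    have hd1' : (0:ℝ) < a ^ 2 / 2 * u ^ 2 := by positivity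
    calc (a * u - f u) / (f u * (a * u)) ≤ (M / 2 * u ^ 2) / (a ^ 2 / 2 * u ^ 2) := by
          apply div_le_div₀ (by positivity) (by linarith) hd1'
          nlinarith
      _ = M / a ^ 2 := by
          field_simp
  -- measurability
  have hmeas : Measurable h := by
    apply Measurable.sub
    · exact (measurable_const.div hd1.continuous.measurable)
    · exact measurable_const.div (measurable_const.mul measurable_id)
  -- integrability
  have hint : ∀ x ∈ I, IntegrableOn h (Ioc 0 x) := by
    intro x hx
    have hx0 := hIpos x hx
    set m := min δ x with hm
    have hm0 : 0 < m := lt_min hδ0 hx0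
    have hmx : m ≤ x := min_le_right _ _
    have hu : Ioc (0:ℝ) m ∪ Ioc m x = Ioc 0 x := Ioc_union_Ioc_eq_Ioc hm0.le hmx
    rw [← hu]
    apply IntegrableOn.union
    · refine Measure.integrableOn_of_bounded (M := M / a ^ 2) (measure_Ioc_lt_top).ne
        hmeas.aestronglyMeasurable ?_
      rw [ae_restrict_iff' measurableSet_Ioc]
      refine ae_of_all _ fun u hu => ?_
      rw [Real.norm_eq_abs]
      exact hbound u ⟨hu.1, le_trans hu.2 (min_le_left _ _)⟩
    · have hcont : ContinuousOn h (Icc m x) := by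
        have hne : ∀ u ∈ Icc m x, f u ≠ 0 := by
          intro u hu
          exact (hfpos u (hIdown x hx u (lt_of_lt_of_le hm0 hu.1) hu.2)).ne'
        have hne2 : ∀ u ∈ Icc m x, a * u ≠ 0 := by
          intro u hu
          have : 0 < u := lt_of_lt_of_le hm0 hu.1
          positivity
        exact (continuousOn_const.div hd1.continuous.continuousOn hne).sub
          (continuousOn_const.div (continuous_const.mul continuous_id).continuousOn hne2)
      exact (hcont.integrableOn_Icc).mono_set Ioc_subset_Icc_self
  -- derivative of G
  have hGderiv : ∀ x ∈ I, HasDerivAt G (1 / f x) x := by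
    intro x hx
    have hx0 := hIpos x hx
    have hfx := hfpos x hx
    have hii : IntervalIntegrable h volume 0 x :=
      (intervalIntegrable_iff_integrableOn_Ioc_of_le hx0.le).mpr (hint x hx)
    have hca : ContinuousAt h x := by
      apply ContinuousAt.sub
      · exact (continuousAt_const.div (hd1.continuous.continuousAt) hfx.ne')
      · exact continuousAt_const.div ((continuous_const.mul continuous_id).continuousAt)
          (by positivity)
    have hF : HasDerivAt (fun y => ∫ u in (0:ℝ)..y, h u) (h x) x :=
      intervalIntegral.integral_hasDerivAt_right hii
        ⟨univ, univ_mem, hmeas.aestronglyMeasurable.restrict⟩ hca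
    have hlog : HasDerivAt (fun y => (1 / a) * Real.log y) ((1 / a) * x⁻¹) x :=
      (Real.hasDerivAt_log hx0.ne').const_mul (1 / a)
    have hsum := hF.add hlog
    have heq : G =ᶠ[nhds x] fun y => (∫ u in (0:ℝ)..y, h u) + (1 / a) * Real.log y := by
      filter_upwards [IsOpen.mem_nhds isOpen_Ioi hx0] with y hy
      rw [hG y, intervalIntegral.integral_of_le (le_of_lt hy)]
    have hval : h x + (1 / a) * x⁻¹ = 1 / f x := by
      rw [hh]
      field_simp
      ring
    rw [← hval]
    exact hsum.congr_of_eventuallyEq heq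
  -- I open and convex
  have hIopen : IsOpen I := by
    have : I = Ioi 0 ∩ ((fun x : ℝ => (x : EReal)) ⁻¹' (Iio xstar)) := by
      rw [hI]; ext x; simp [mem_Ioi, and_comm]
    rw [this]
    exact isOpen_Ioi.inter (isOpen_Iio.preimage continuous_coe_real_ereal)
  have hIord : I.OrdConnected := by
    constructor
    intro x hx y hy z hz
    rw [hI] at hx hy ⊢
    exact ⟨lt_of_lt_of_le hx.1 hz.1,
      lt_of_le_of_lt (EReal.coe_le_coe_iff.mpr hz.2) hy.2⟩
  have hIconv : Convex ℝ I := hIord.convex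
  have hGcont : ContinuousOn G I := fun x hx =>
    (hGderiv x hx).continuousAt.continuousWithinAt
  -- strict monotonicity
  have hmono : StrictMonoOn G I := by
    apply strictMonoOn_of_deriv_pos hIconv hGcont
    intro x hx
    rw [hIopen.interior_eq] at hx
    rw [(hGderiv x hx).deriv]
    exact one_div_pos.mpr (hfpos x hx)
  -- a base point of I
  obtain ⟨x₀, hx₀⟩ : ∃ x, x ∈ I := by
    rcases hroot with htop' | ⟨r, hr, hfr⟩
    · exact ⟨1, by rw [hI]; exact ⟨one_pos, htop' ▸ EReal.coe_lt_top 1⟩⟩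
    · have hr0 : 0 < r := by
        rw [hr] at hxstar
        exact_mod_cast hxstar
      refine ⟨r / 2, by rw [hI]; exact ⟨by linarith, by rw [hr]; exact_mod_cast (by linarith : r / 2 < r)⟩⟩
  have hx₀0 : 0 < x₀ := hIpos x₀ hx₀
  -- tendsto atBot at 0⁺
  have hbot : Tendsto G (nhdsWithin 0 (Ioi 0)) atBot := by
    set C := ∫ u in Ioc (0:ℝ) x₀, h u with hC
    have hub : ∀ x ∈ Ioc (0:ℝ) x₀, G x ≤ C + 1 / a * Real.log x := by
      intro x hx
      rw [hG x]
      have hmono' : (∫ u in Ioc (0:ℝ) x, h u) ≤ C := by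
        apply setIntegral_mono_set (hint x₀ hx₀)
        · rw [EventuallyLE, ae_restrict_iff' measurableSet_Ioc]
          exact ae_of_all _ fun u hu => by simpa using hnn u (hIdown x₀ hx₀ u hu.1 hu.2)
        · exact (Ioc_subset_Ioc_right hx.2).eventuallyLE
      exact add_le_add_left hmono' _
    have h1 : Tendsto (fun x : ℝ => C + 1 / a * Real.log x) (nhdsWithin 0 (Ioi 0)) atBot :=
      tendsto_atBot_add_const_left _ C
        (Tendsto.const_mul_atBot (by positivity) Real.tendsto_log_nhdsGT_zero)
    apply tendsto_atBot_mono' _ _ h1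
    filter_upwards [Ioc_mem_nhdsGT_of_mem (⟨le_rfl, hx₀0⟩ : (0:ℝ) ∈ Ico 0 x₀)] with x hx
    exact hub x hx
  -- tendsto atTop at x*
  have hTN : Tendsto G ((Filter.comap (fun x : ℝ => (x : EReal)) (nhdsWithin xstar (Iio xstar))) ⊓
        Filter.principal I) atTop ∧
      ((Filter.comap (fun x : ℝ => (x : EReal)) (nhdsWithin xstar (Iio xstar))) ⊓
        Filter.principal I).NeBot := by
    rcases hroot with htop' | ⟨r, hr, hfr⟩
    · subst htop'
      have hid : Tendsto (fun x : ℝ => x)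
          ((Filter.comap (fun x : ℝ => (x : EReal)) (nhdsWithin ⊤ (Iio ⊤))) ⊓
            Filter.principal I) atTop := by
        rw [tendsto_atTop]
        intro b
        apply Eventually.filter_mono inf_le_left
        have h1 : Ici ((b : EReal)) ∈ nhdsWithin (⊤ : EReal) (Iio ⊤) :=
          mem_nhdsWithin_of_mem_nhds
            (mem_of_superset (isOpen_Ioi.mem_nhds (EReal.coe_lt_top b)) Ioi_subset_Ici_self)
        filter_upwards [preimage_mem_comap h1] with x hx
        simpa using hx
      have hlb : ∀ᶠ x in (Filter.comap (fun x : ℝ => (x : EReal)) (nhdsWithin ⊤ (Iio ⊤))) ⊓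
          Filter.principal I, 1 / a * Real.log x ≤ G x := by
        apply Eventually.filter_mono inf_le_right
        rw [eventually_principal]
        intro x hx
        rw [hG x]
        have hnn2 : 0 ≤ ∫ u in Ioc (0:ℝ) x, h u :=
          setIntegral_nonneg measurableSet_Ioc fun u hu => hnn u (hIdown x hx u hu.1 hu.2)
        linarith
      have hT : Tendsto (fun x : ℝ => 1 / a * Real.log x) _ atTop :=
        Tendsto.const_mul_atTop (by positivity) (Real.tendsto_log_atTop.comp hid)
      refine ⟨tendsto_atTop_mono' _ hlb hT, ?_⟩
      have hle : (atTop : Filter ℝ) ≤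
          (Filter.comap (fun x : ℝ => (x : EReal)) (nhdsWithin ⊤ (Iio ⊤))) ⊓
            Filter.principal I := by
        refine le_inf ?_ ?_
        · rw [← tendsto_iff_comap]
          apply tendsto_nhdsWithin_of_tendsto_nhds_of_eventually_within
          · rw [EReal.tendsto_nhds_top_iff_real]
            intro b
            filter_upwards [eventually_gt_atTop b] with x hx
            exact_mod_cast hx
          · exact Eventually.of_forall fun x => EReal.coe_lt_top x
        · rw [le_principal_iff]
          have hsub : Ioi (0:ℝ) ⊆ I := by
            rw [hI]; intro x hx; exact ⟨hx, EReal.coe_lt_top x⟩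
          exact mem_of_superset (Ioi_mem_atTop 0) hsub
      exact atTop_neBot.mono hle
    · subst hr
      have hr0 : 0 < r := by exact_mod_cast hxstar
      have hIeq : I = Ioo 0 r := by
        rw [hI]; ext x
        exact ⟨fun hx => ⟨hx.1, by exact_mod_cast hx.2⟩,
          fun hx => ⟨hx.1, by exact_mod_cast hx.2⟩⟩
      have hcomap : Filter.comap (fun x : ℝ => (x : EReal))
          (nhdsWithin (r : EReal) (Iio (r : EReal))) = nhdsWithin r (Iio r) := by
        rw [nhdsWithin, nhdsWithin, comap_inf, comap_principal,
          ← EReal.isEmbedding_coe.toIsInducing.nhds_eq_comap]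
        have hpre : (fun x : ℝ => (x : EReal)) ⁻¹' Iio (r : EReal) = Iio r := by
          ext x
          simp only [mem_preimage, mem_Iio]
          exact EReal.coe_lt_coe_iff
        rw [hpre]
      have hLle : (Filter.comap (fun x : ℝ => (x : EReal))
          (nhdsWithin (r : EReal) (Iio (r : EReal)))) ⊓ Filter.principal I ≤
          nhdsWithin r (Iio r) := by
        rw [hcomap] at *
        exact inf_le_left
      have hx₀r : x₀ < r := by rw [hIeq] at hx₀; exact hx₀.2
      -- Lipschitz bound near r
      obtain ⟨K, hK⟩ := (isCompact_Icc (a := (0:ℝ)) (b := r)).exists_bound_of_continuousOn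
        hd2.continuous.continuousOn
      set L₀ := max K 1 with hL₀def
      have hL₀ : 0 < L₀ := lt_of_lt_of_le one_pos (le_max_right _ _)
      have hlip : ∀ u ∈ Icc (0:ℝ) r, f u ≤ L₀ * (r - u) := by
        intro u hu
        have key := norm_image_sub_le_of_norm_deriv_le_segment'
          (f := f) (f' := deriv f) (a := u) (b := r) (C := L₀)
          (fun x _ => (hd1 x).hasDerivAt.hasDerivWithinAt)
          (fun x hx => le_trans (hK x ⟨le_trans hu.1 hx.1, hx.2.le⟩) (le_max_left _ _))
          r (right_mem_Icc.mpr hu.2)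
        rw [hfr, Real.norm_eq_abs, zero_sub, abs_neg] at key
        exact le_trans (le_abs_self _) key
      set C₂ := 1 / L₀ * Real.log (r - x₀) - (r - x₀) / (a * x₀) + 1 / a * Real.log x₀ with hC₂
      set gb : ℝ → ℝ := fun u => 1 / L₀ * (r - u)⁻¹ - (a * x₀)⁻¹ with hgb
      have key : ∀ x ∈ I, x₀ ≤ x → -(1 / L₀) * Real.log (r - x) + C₂ ≤ G x := by
        intro x hxI hxx₀
        have hxr : x < r := by rw [hIeq] at hxI; exact hxI.2
        have hx0 : 0 < x := hIpos x hxI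
        have s1 : (∫ u in Ioc x₀ x, h u) ≤ ∫ u in Ioc (0:ℝ) x, h u := by
          apply setIntegral_mono_set (hint x hxI)
          · rw [EventuallyLE, ae_restrict_iff' measurableSet_Ioc]
            exact ae_of_all _ fun u hu => by simpa using hnn u (hIdown x hxI u hu.1 hu.2)
          · exact (Ioc_subset_Ioc_left hx₀0.le).eventuallyLE
        have hgbcont : ContinuousOn gb (Icc x₀ x) := by
          apply ContinuousOn.sub
          · apply continuousOn_const.mul
            apply ContinuousOn.inv₀ (continuous_const.sub continuous_id).continuousOn
            intro u hu
            exact (sub_pos.mpr (lt_of_le_of_lt hu.2 hxr)).ne'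
          · exact continuousOn_const
        have s2 : (∫ u in Ioc x₀ x, gb u) ≤ ∫ u in Ioc x₀ x, h u := by
          apply setIntegral_mono_on
          · exact (hgbcont.integrableOn_Icc).mono_set Ioc_subset_Icc_self
          · exact (hint x hxI).mono_set (Ioc_subset_Ioc_left hx₀0.le)
          · exact measurableSet_Ioc
          · intro u hu
            have hu0 : 0 < u := lt_of_lt_of_le hx₀0 hu.1.le
            have hur : u < r := lt_of_le_of_lt hu.2 hxr
            have huI : u ∈ I := hIdown x hxI u hu0 hu.2
            have hfu : 0 < f u := hfpos u huI
            have h1 : 1 / L₀ * (r - u)⁻¹ ≤ 1 / f u := by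
              have hfle : f u ≤ L₀ * (r - u) := hlip u ⟨hu0.le, hur.le⟩
              calc 1 / L₀ * (r - u)⁻¹ = (L₀ * (r - u))⁻¹ := by rw [mul_inv, one_div]
                _ ≤ (f u)⁻¹ := inv_anti₀ hfu hfle
                _ = 1 / f u := (one_div _).symm
            have h2 : 1 / (a * u) ≤ (a * x₀)⁻¹ := by
              rw [one_div]
              exact inv_anti₀ (by positivity)
                (mul_le_mul_of_nonneg_left hu.1.le ha0.le)
            simp only [hgb, hh]
            linarith
        have s3 : (∫ u in Ioc x₀ x, gb u) =
            1 / L₀ * (Real.log (r - x₀) - Real.log (r - x)) - (x - x₀) * (a * x₀)⁻¹ := by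
          rw [← intervalIntegral.integral_of_le hxx₀]
          have hanti : ∀ u ∈ uIcc x₀ x,
              HasDerivAt (fun u => -(1 / L₀) * Real.log (r - u) - u * (a * x₀)⁻¹) (gb u) u := by
            intro u hu
            rw [uIcc_of_le hxx₀] at hu
            have hur : u < r := lt_of_le_of_lt hu.2 hxr
            have h1 : HasDerivAt (fun u : ℝ => r - u) (-1) u := by
              simpa using (hasDerivAt_id u).const_sub r
            have h2 : HasDerivAt (fun u : ℝ => Real.log (r - u)) ((r - u)⁻¹ * -1) u :=
              (Real.hasDerivAt_log (sub_pos.mpr hur).ne').comp u h1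
            have h3 := (h2.const_mul (-(1 / L₀))).sub ((hasDerivAt_id u).mul_const ((a * x₀)⁻¹))
            exact h3.congr_deriv (by simp only [hgb]; ring)
          have hgint : IntervalIntegrable gb volume x₀ x := by
            apply ContinuousOn.intervalIntegrable
            rwa [uIcc_of_le hxx₀]
          rw [intervalIntegral.integral_eq_sub_of_hasDerivAt hanti hgint]
          ring
        have s4 : 1 / a * Real.log x₀ ≤ 1 / a * Real.log x :=
          mul_le_mul_of_nonneg_left (Real.log_le_log hx₀0 hxx₀) (by positivity)
        have s5 : (x - x₀) * (a * x₀)⁻¹ ≤ (r - x₀) / (a * x₀) := by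
          rw [div_eq_mul_inv]
          exact mul_le_mul_of_nonneg_right (by linarith) (by positivity)
        rw [hG x, hC₂]
        linarith
      have h5 : Tendsto (fun x : ℝ => -(1 / L₀) * Real.log (r - x) + C₂)
          (nhdsWithin r (Iio r)) atTop := by
        apply tendsto_atTop_add_const_right
        have hsubt : Tendsto (fun x : ℝ => r - x) (nhdsWithin r (Iio r))
            (nhdsWithin 0 (Ioi 0)) := by
          apply tendsto_nhdsWithin_of_tendsto_nhds_of_eventually_within
          · have h6 : Tendsto (fun x : ℝ => r - x) (nhds r) (nhds (r - r)) :=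
              (continuous_const.sub continuous_id).tendsto r
            rw [sub_self] at h6
            exact h6.mono_left nhdsWithin_le_nhds
          · filter_upwards [self_mem_nhdsWithin] with x hx
            exact sub_pos.mpr (mem_Iio.mp hx)
        have hlogb : Tendsto (fun x : ℝ => Real.log (r - x)) (nhdsWithin r (Iio r)) atBot :=
          Real.tendsto_log_nhdsGT_zero.comp hsubt
        have h7 := Tendsto.const_mul_atTop (r := 1 / L₀) (by positivity)
          (tendsto_neg_atBot_atTop.comp hlogb)
        refine h7.congr fun x => ?_
        simp only [Function.comp]
        ring
      constructor
      · refine tendsto_atTop_mono' _ ?_ (h5.mono_left hLle)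
        have hev1 : ∀ᶠ x in (Filter.comap (fun x : ℝ => (x : EReal))
            (nhdsWithin (r : EReal) (Iio (r : EReal)))) ⊓ Filter.principal I, x ∈ I :=
          (eventually_principal.mpr fun x hx => hx).filter_mono inf_le_right
        have hev2 : ∀ᶠ x in (Filter.comap (fun x : ℝ => (x : EReal))
            (nhdsWithin (r : EReal) (Iio (r : EReal)))) ⊓ Filter.principal I, x₀ ≤ x :=
          hLle (mem_nhdsWithin_of_mem_nhds (Ici_mem_nhds hx₀r))
        filter_upwards [hev1, hev2] with x h1 h2 using key x h1 h2
      · have h1 : nhdsWithin r (Ioo 0 r) ≤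
            (Filter.comap (fun x : ℝ => (x : EReal))
              (nhdsWithin (r : EReal) (Iio (r : EReal)))) ⊓ Filter.principal I := by
          refine le_inf ?_ ?_
          · rw [hcomap]
            exact nhdsWithin_mono r Ioo_subset_Iio_self
          · rw [le_principal_iff, hIeq]
            exact self_mem_nhdsWithin
        have h2 : (nhdsWithin r (Ioo 0 r)).NeBot := by
          apply mem_closure_iff_nhdsWithin_neBot.mp
          rw [closure_Ioo hr0.ne]
          exact ⟨hr0.le, le_rfl⟩
        exact h2.mono h1
  obtain ⟨htop, hLne⟩ := hTN
  refine ⟨hmono, hbot, htop, ⟨fun x _ => mem_univ _, hmono.injOn, ?_⟩⟩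
  intro y _
  have e1 : ∀ᶠ x in nhdsWithin 0 (Ioi 0), G x < y := hbot.eventually (eventually_lt_atBot y)
  have e1b : Ioo (0:ℝ) x₀ ∈ nhdsWithin 0 (Ioi 0) := Ioo_mem_nhdsGT_of_mem ⟨le_rfl, hx₀0⟩
  obtain ⟨x1, hx1y, hx1m⟩ :=
    (e1.and (eventually_of_mem e1b fun x hx => hIdown x₀ hx₀ x hx.1 hx.2.le)).exists
  have e2 : ∀ᶠ x in _, y < G x := htop.eventually (eventually_gt_atTop y)
  have e2b : ∀ᶠ x in (Filter.comap (fun x : ℝ => (x : EReal))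
      (nhdsWithin xstar (Iio xstar))) ⊓ Filter.principal I, x ∈ I :=
    (eventually_principal.mpr fun x hx => hx).filter_mono inf_le_right
  obtain ⟨x2, hx2y, hx2m⟩ := (e2.and e2b).exists
  have hx12 : x1 ≤ x2 := by
    by_contra hcon
    push_neg at hcon
    have := hmono hx2m hx1m hcon
    linarith
  have hsub : Icc x1 x2 ⊆ I := hIord.out hx1m hx2m
  obtain ⟨x, hx, hGx⟩ := intermediate_value_Icc hx12 (hGcont.mono hsub) ⟨hx1y.le, hx2y.le⟩
  exact ⟨x, hsub hx, hGx⟩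
end
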